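/- Let A be an integral domain which is not a field, and let n be a non-negative integer. Then every n-universal subset of A has at least n+1 elements. -/

import Mathlib

/-- A finite subset `S` of an integral domain `A` with field of fractions `K` is
`n`-universal if for every polynomial `P ∈ K[X]` of degree at most `n`, `P` maps `A`
into `A` if and only if `P` maps `S` into `A` (where "into `A`" means into the image
of `A` in `K`). -/
def IsNUniversal (A K : Type*) [CommRing A] [IsDomain A] [Field K] [Algebra A K]
    [IsFractionRing A K] (n : ℕ) (S : Finset A) : Prop :=
  ∀ P : Polynomial K, P.natDegree ≤ n →
    ((∀ a : A, ∃ b : A, Polynomial.eval (algebraMap A K a) P = algebraMap A K b) ↔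
      ∀ s ∈ S, ∃ b : A, Polynomial.eval (algebraMap A K s) P = algebraMap A K b)

/-- Every `n`-universal subset of an integral domain which is not a field has at least
`n + 1` elements. -/
theorem stmt0 {A K : Type*} [CommRing A] [IsDomain A] [Field K] [Algebra A K]
    [IsFractionRing A K] (hA : ¬ IsField A) (n : ℕ) (S : Finset A)
    (hS : IsNUniversal A K n S) : n + 1 ≤ S.card := by
  by_contra hcard
  push_neg at hcard
  have hcard' : S.card ≤ n := by omega
  have hinj : Function.Injective (algebraMap A K) := IsFractionRing.injective A K
  -- get a nonzero nonunit t
  obtain ⟨t, ht0, htnu⟩ : ∃ t : A, t ≠ 0 ∧ ∀ b : A, t * b ≠ 1 := by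
    by_contra h
    push_neg at h
    exact hA ⟨exists_pair_ne A, mul_comm, fun {a} ha => h a ha⟩
  -- A is infinite
  haveI : Infinite A := by
    by_contra h
    rw [not_infinite_iff_finite] at h
    exact hA (Finite.isField_of_domain A)
  obtain ⟨a, haS⟩ := Infinite.exists_notMem_finset S
  set d : A := ∏ s ∈ S, (a - s) with hd
  have hd0 : d ≠ 0 := Finset.prod_ne_zero_iff.mpr fun s hs => sub_ne_zero.mpr fun he => haS (he ▸ hs)
  have htd0 : algebraMap A K (t * d) ≠ 0 := fun h =>
    (mul_ne_zero ht0 hd0) (hinj (h.trans (map_zero (algebraMap A K)).symm))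
  set P : Polynomial K :=
    Polynomial.C ((algebraMap A K (t * d))⁻¹) *
      ∏ s ∈ S, (Polynomial.X - Polynomial.C (algebraMap A K s)) with hP
  have hdeg : P.natDegree ≤ n := by
    refine le_trans (Polynomial.natDegree_C_mul_le _ _) (le_trans ?_ hcard')
    rw [Polynomial.natDegree_prod_of_monic _ _ fun s _ => Polynomial.monic_X_sub_C _]
    simp [Polynomial.natDegree_X_sub_C]
  have heval : ∀ x : A, Polynomial.eval (algebraMap A K x) P =
      (algebraMap A K (t * d))⁻¹ * ∏ s ∈ S, (algebraMap A K x - algebraMap A K s) := by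
    intro x
    simp [hP, Polynomial.eval_prod]
  have hRHS : ∀ s ∈ S, ∃ b : A, Polynomial.eval (algebraMap A K s) P = algebraMap A K b := by
    intro s hsm
    refine ⟨0, ?_⟩
    rw [heval s, Finset.prod_eq_zero hsm (by ring)]
    simp
  obtain ⟨b, hb⟩ := ((hS P hdeg).mpr hRHS) a
  rw [heval a] at hb
  have hdk : ∏ s ∈ S, (algebraMap A K a - algebraMap A K s) = algebraMap A K d := by
    rw [hd, map_prod]
    simp
  rw [hdk, map_mul] at hb
  have hdK0 : algebraMap A K d ≠ 0 := fun h => hd0 (hinj (h.trans (map_zero _).symm))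
  have htK0 : algebraMap A K t ≠ 0 := fun h => ht0 (hinj (h.trans (map_zero _).symm))
  rw [mul_inv, mul_assoc, inv_mul_cancel₀ hdK0, mul_one] at hb
  have : algebraMap A K (t * b) = algebraMap A K 1 := by
    rw [map_mul, ← hb, map_one]
    field_simp
  exact htnu b (hinj this)
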